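/- arXiv:2110.13844 — 5 statements merged into one kernel-verified Lean document; each statement's English description precedes it below -/
import Mathlib

section
/- Let N be a positive integer and m a nonzero integer. Let R = ℤ[T,T⁻¹] be the ring of Laurent polynomials over ℤ, let A be the 4×4 matrix over R whose diagonal entries all equal T^N − 1, whose entry in row 1 and column 4 equals −mT, and whose other entries are zero, let M be the cokernel of the R-linear map R⁴ → R⁴ given by multiplication by A, and for i ∈ ℤ let σ_i ∈ M denote the class of the vector (0,0,0,i). If i is a nonzero integer, then for every nonzero integer n one has n·(T^N − 1)·σ_i ≠ 0 in M. -/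
open LaurentPolynomial

noncomputable section

/-- The 4×4 matrix over ℤ[T,T⁻¹] with diagonal entries `T^N - 1`, entry `-m·T`
in row 1, column 4 (zero-indexed: row 0, column 3), and all other entries zero. -/
def Amat (N : ℕ) (m : ℤ) : Matrix (Fin 4) (Fin 4) (LaurentPolynomial ℤ) :=
  fun i j =>
    if i = j then T (N : ℤ) - 1
    else if i = 0 ∧ j = 3 then -(m : LaurentPolynomial ℤ) * T 1
    else 0

/-- The cokernel of the map `R⁴ → R⁴` given by multiplication by `Amat N m`. -/
def Coker (N : ℕ) (m : ℤ) :=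
  (Fin 4 → LaurentPolynomial ℤ) ⧸ LinearMap.range (Amat N m).mulVecLin

instance (N : ℕ) (m : ℤ) : AddCommGroup (Coker N m) :=
  Submodule.Quotient.addCommGroup _

instance (N : ℕ) (m : ℤ) : Module (LaurentPolynomial ℤ) (Coker N m) :=
  Submodule.Quotient.module _

/-- `σ_i`: the class of the vector `(0,0,0,i)` in the cokernel. -/
def sigma (N : ℕ) (m : ℤ) (i : ℤ) : Coker N m :=
  Submodule.Quotient.mk ![0, 0, 0, (i : LaurentPolynomial ℤ)]

def ev : LaurentPolynomial ℤ →ₐ[ℤ] ℤ := AddMonoidAlgebra.lift ℤ ℤ ℤ 1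
lemma ev_T (n : ℤ) : ev (T n) = 1 := by
  show (AddMonoidAlgebra.lift ℤ ℤ ℤ 1) (AddMonoidAlgebra.single n (1:ℤ)) = 1
  rw [AddMonoidAlgebra.lift_single]; simp
lemma ev_int (r : ℤ) : ev (r : LaurentPolynomial ℤ) = r := by
  have h : ((r : ℤ) : LaurentPolynomial ℤ) = LaurentPolynomial.C r := by
    simp [LaurentPolynomial.C_eq_algebraMap]
  rw [h]
  show (AddMonoidAlgebra.lift ℤ ℤ ℤ 1) (AddMonoidAlgebra.single (0:ℤ) r) = r
  rw [AddMonoidAlgebra.lift_single]; simp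
lemma Tsub_ne (N : ℕ) (h : 0 < N) : (T (N:ℤ) - 1 : LaurentPolynomial ℤ) ≠ 0 := by
  intro hEq
  have h1 : (T (N:ℤ) : LaurentPolynomial ℤ) = 1 := by linear_combination hEq
  have h2 := congrArg LaurentPolynomial.degree h1
  rw [LaurentPolynomial.degree_T, show (1 : LaurentPolynomial ℤ) = LaurentPolynomial.C 1 by simp,
    LaurentPolynomial.degree_C one_ne_zero] at h2
  simp at h2
  omega

theorem stmt2 (N : ℕ) (hN : 0 < N) (m : ℤ) (hm : m ≠ 0) (i : ℤ) (hi : i ≠ 0) :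
    ∀ n : ℤ, n ≠ 0 → n • (((T (N : ℤ) - 1 : LaurentPolynomial ℤ)) • sigma N m i) ≠ 0 := by
  intro n hn h
  set c : LaurentPolynomial ℤ := T (N:ℤ) - 1 with hc
  have hT : c ≠ 0 := Tsub_ne N hN
  have h' : (((n : LaurentPolynomial ℤ) * c) • sigma N m i) = 0 := by
    rw [mul_smul]
    rw [show ((n : LaurentPolynomial ℤ) • (c • sigma N m i)) = n • (c • sigma N m i) from
      Int.cast_smul_eq_zsmul _ _ _]
    exact h
  replace h' : Submodule.Quotient.mk (p := LinearMap.range (Amat N m).mulVecLin)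
      (((n : LaurentPolynomial ℤ) * c) • ![0, 0, 0, (i : LaurentPolynomial ℤ)]) = 0 := h'
  rw [Submodule.Quotient.mk_eq_zero] at h'
  obtain ⟨v, hv⟩ := h'
  have h3 := congrFun hv 3
  have h0 := congrFun hv 0
  simp only [Matrix.mulVecLin_apply, Matrix.mulVec, dotProduct, Fin.sum_univ_four, Amat,
    Pi.smul_apply, Matrix.cons_val_zero, Matrix.cons_val_three, Matrix.cons_val_one,
    Matrix.head_cons, smul_eq_mul] at h3 h0
  simp +decide only [] at h3 h0
  norm_num at h3 h0
  -- h3 : c * v 3 = n * c * i ; derive v 3 = n * i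
  have hv3 : v 3 = (n : LaurentPolynomial ℤ) * i := by
    apply mul_left_cancel₀ hT
    rw [h3]; ring
  rw [hv3] at h0
  -- h0 : c * v 0 + (-m * T 1) * (n * i) = 0
  have := congrArg ev h0
  simp only [map_add, map_mul, map_neg, map_zero, ev_int, ev_T] at this
  rw [show ev c = 0 by rw [hc]; simp [map_sub, ev_T]] at this
  simp at this
  tauto
end
end

section
/- Let N be a positive integer and m a nonzero integer. Let R = ℤ[T,T⁻¹] be the ring of Laurent polynomials over ℤ, let A be the 4×4 matrix over R whose diagonal entries all equal T^N − 1, whose entry in row 1 and column 4 equals −mT, and whose other entries are zero, let M be the cokernel of the R-linear map R⁴ → R⁴ given by multiplication by A, and for i ∈ ℤ let σ_i ∈ M denote the class of the vector (0,0,0,i). If i is a nonzero integer, then for every nonzero integer k one has (T^k − 1)·σ_i ≠ 0 in M (where T^k denotes the Laurent monomial of degree k, which may be negative). -/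
open LaurentPolynomial

noncomputable section

namespace Stmt3Aux

open TrivSqZeroExt

set_option linter.unnecessarySeqFocus false

def ζ (N : ℕ) : ℂ := Complex.exp (2 * Real.pi * Complex.I / N)

lemma ζ_ne_zero (N : ℕ) : ζ N ≠ 0 := Complex.exp_ne_zero _

lemma ζ_pow_N (N : ℕ) (hN : 0 < N) : ζ N ^ (N : ℤ) = 1 := by
  rw [zpow_natCast]
  exact (Complex.isPrimitiveRoot_exp N hN.ne').pow_eq_one

lemma mul_mk (a b c d : ℂ) :
    (inl a + inr b : DualNumber ℂ) * (inl c + inr d) = inl (a * c) + inr (a * d + c * b) := by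
  apply TrivSqZeroExt.ext <;> simp [fst_mul, snd_mul, smul_eq_mul] <;> ring

lemma isUnit_base (N : ℕ) : IsUnit (inl (ζ N) + inr (ζ N) : DualNumber ℂ) := by
  rw [TrivSqZeroExt.isUnit_iff_isUnit_fst]
  simp [ζ_ne_zero N, isUnit_iff_ne_zero]

def u (N : ℕ) : (DualNumber ℂ)ˣ := (isUnit_base N).unit

lemma u_val (N : ℕ) : ((u N : (DualNumber ℂ)ˣ) : DualNumber ℂ) = inl (ζ N) + inr (ζ N) :=
  (isUnit_base N).unit_spec

lemma u_pow (N : ℕ) (n : ℕ) :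
    ((u N ^ n : (DualNumber ℂ)ˣ) : DualNumber ℂ) = inl (ζ N ^ n) + inr ((n : ℂ) * ζ N ^ n) := by
  induction n with
  | zero => simp
  | succ n ih =>
      rw [pow_succ, Units.val_mul, ih, u_val, mul_mk]
      apply TrivSqZeroExt.ext <;>
        simp [fst_add, snd_add, fst_inl, snd_inl, fst_inr, snd_inr] <;> ring

lemma u_zpow (N : ℕ) (n : ℤ) :
    ((u N ^ n : (DualNumber ℂ)ˣ) : DualNumber ℂ) = inl (ζ N ^ n) + inr ((n : ℂ) * ζ N ^ n) := by
  have hζ := ζ_ne_zero N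
  cases n with
  | ofNat n => rw [Int.ofNat_eq_coe, zpow_natCast, u_pow, zpow_natCast]; norm_num
  | negSucc n =>
      rw [zpow_negSucc]
      have hz : (ζ N ^ (Int.negSucc n)) = (ζ N ^ (n + 1 : ℕ))⁻¹ := by
        rw [Int.negSucc_eq, zpow_neg, show ((n : ℤ) + 1) = ((n + 1 : ℕ) : ℤ) by push_cast; ring,
          zpow_natCast]
      have hmul : ((u N ^ (n + 1) : (DualNumber ℂ)ˣ) : DualNumber ℂ) *
          (inl (ζ N ^ (Int.negSucc n)) + inr ((Int.negSucc n : ℂ) * ζ N ^ (Int.negSucc n))) = 1 := by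
        rw [u_pow, mul_mk, hz]
        have hne : ζ N ^ (n + 1 : ℕ) ≠ 0 := pow_ne_zero _ hζ
        have h1 : ζ N ^ (n + 1 : ℕ) * (ζ N ^ (n + 1 : ℕ))⁻¹ = 1 := mul_inv_cancel₀ hne
        rw [h1]
        have h2 : ζ N ^ (n + 1 : ℕ) * ((Int.negSucc n : ℂ) * (ζ N ^ (n + 1 : ℕ))⁻¹) +
            (ζ N ^ (n + 1 : ℕ))⁻¹ * (((n + 1 : ℕ) : ℂ) * ζ N ^ (n + 1 : ℕ)) = 0 := by
          push_cast [Int.negSucc_eq]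
          field_simp
          ring
        rw [h2]
        simp
      rw [Units.inv_eq_of_mul_eq_one_right hmul]

def φ (N : ℕ) : LaurentPolynomial ℤ →ₐ[ℤ] DualNumber ℂ :=
  AddMonoidAlgebra.lift ℤ (DualNumber ℂ) ℤ ((Units.coeHom _).comp (zpowersHom _ (u N)))

lemma φ_T (N : ℕ) (n : ℤ) : φ N (T n) = inl (ζ N ^ n) + inr ((n : ℂ) * ζ N ^ n) := by
  have h : (T n : LaurentPolynomial ℤ) = AddMonoidAlgebra.single n 1 := rfl
  rw [h, φ, AddMonoidAlgebra.lift_single, one_smul]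
  simpa using u_zpow N n

end Stmt3Aux

theorem stmt3 (N : ℕ) (hN : 0 < N) (m : ℤ) (hm : m ≠ 0) (i : ℤ) (hi : i ≠ 0) :
    ∀ k : ℤ, k ≠ 0 → ((T k - 1 : LaurentPolynomial ℤ)) • sigma N m i ≠ 0 := by
  intro k hk h
  change ((T k - 1 : LaurentPolynomial ℤ) • (Submodule.Quotient.mk ![0, 0, 0, (i : LaurentPolynomial ℤ)] :
    (Fin 4 → LaurentPolynomial ℤ) ⧸ LinearMap.range (Amat N m).mulVecLin)) = 0 at h
  rw [← Submodule.Quotient.mk_smul, Submodule.Quotient.mk_eq_zero] at h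
  obtain ⟨v, hv⟩ := h
  rw [Matrix.mulVecLin_apply] at hv
  have h0 := congrFun hv 0
  have h3 := congrFun hv 3
  simp [Matrix.mulVec, dotProduct, Fin.sum_univ_four, Amat] at h0 h3
  have e0 := congrArg (Stmt3Aux.φ N) h0
  have e3 := congrArg (Stmt3Aux.φ N) h3
  simp only [map_add, map_mul, map_sub, map_one, map_neg, map_zero, map_intCast,
    Stmt3Aux.φ_T] at e0 e3
  have hζ := Stmt3Aux.ζ_ne_zero N
  have hζN := Stmt3Aux.ζ_pow_N N hN
  have f0 := congrArg TrivSqZeroExt.fst e0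
  simp only [TrivSqZeroExt.fst_add, TrivSqZeroExt.fst_mul, TrivSqZeroExt.fst_sub,
    TrivSqZeroExt.fst_neg, TrivSqZeroExt.fst_one, TrivSqZeroExt.fst_zero,
    TrivSqZeroExt.fst_inl, TrivSqZeroExt.fst_inr, TrivSqZeroExt.fst_intCast, hζN,
    sub_self, zero_mul, zero_add, add_zero, zpow_one] at f0
  have ha3 : TrivSqZeroExt.fst (Stmt3Aux.φ N (v 3)) = 0 := by
    have hmC : (m : ℂ) ≠ 0 := Int.cast_ne_zero.mpr hm
    simpa [neg_eq_zero, mul_eq_zero, hmC, hζ] using f0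
  have s3 := congrArg TrivSqZeroExt.snd e3
  simp only [TrivSqZeroExt.snd_add, TrivSqZeroExt.snd_mul, TrivSqZeroExt.snd_sub,
    TrivSqZeroExt.snd_neg, TrivSqZeroExt.snd_one, TrivSqZeroExt.snd_zero,
    TrivSqZeroExt.fst_add, TrivSqZeroExt.fst_mul, TrivSqZeroExt.fst_sub,
    TrivSqZeroExt.fst_neg, TrivSqZeroExt.fst_one, TrivSqZeroExt.fst_zero,
    TrivSqZeroExt.fst_inl, TrivSqZeroExt.fst_inr, TrivSqZeroExt.snd_inl,
    TrivSqZeroExt.snd_inr, TrivSqZeroExt.fst_intCast, TrivSqZeroExt.snd_intCast,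
    hζN, ha3, sub_self, smul_eq_mul, op_smul_eq_smul, zero_mul, mul_zero, zero_add,
    add_zero, zero_smul, smul_zero] at s3
  rw [sub_zero] at s3
  exact (mul_ne_zero (Int.cast_ne_zero.mpr hi)
    (mul_ne_zero (Int.cast_ne_zero.mpr hk) (zpow_ne_zero _ hζ))) s3.symm
end
end

section
/- Let N be a positive integer and m a nonzero integer. Let R = ℤ[T,T⁻¹] be the ring of Laurent polynomials over ℤ, let A be the 4×4 matrix over R whose diagonal entries all equal T^N − 1, whose entry in row 1 and column 4 equals −mT, and whose other entries are zero, let M be the cokernel of the R-linear map R⁴ → R⁴ given by multiplication by A, and for i ∈ ℤ let σ_i ∈ M denote the class of the vector (0,0,0,i). Then σ_i ≠ σ_j in M whenever i and j are distinct integers. -/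
open LaurentPolynomial

noncomputable section

/-- Augmentation map: evaluation at `T = 1`. -/
def aug : LaurentPolynomial ℤ →ₐ[ℤ] ℤ :=
  AddMonoidAlgebra.lift ℤ ℤ ℤ 1

lemma aug_T (n : ℤ) : aug (T n) = 1 := by
  rw [aug, T, AddMonoidAlgebra.lift_single]; simp

theorem stmt4 (N : ℕ) (hN : 0 < N) (m : ℤ) (hm : m ≠ 0) :
    ∀ i j : ℤ, i ≠ j → sigma N m i ≠ sigma N m j := by
  intro i j hij hEq
  rw [sigma, sigma] at hEq
  replace hEq := (Submodule.Quotient.eq _).mp hEq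
  obtain ⟨v, hv⟩ := hEq
  have h3 := congrFun hv 3
  simp only [Matrix.mulVecLin_apply, Matrix.mulVec, dotProduct,
    Fin.sum_univ_four, Amat, Pi.sub_apply] at h3
  norm_num [Matrix.cons_val_zero, Matrix.cons_val_one] at h3
  -- h3 : (T N - 1) * v 3 = i - j  (as Laurent polynomials)
  have := congrArg aug h3
  simp [map_mul, map_sub, aug_T, map_intCast] at this
  omega
end
end

section
/- Let N be a positive integer and m a nonzero integer. Let R = ℤ[T,T⁻¹] be the ring of Laurent polynomials over ℤ, let A be the 4×4 matrix over R whose diagonal entries all equal T^N − 1, whose entry in row 1 and column 4 equals −mT, and whose other entries are zero, and let M be the cokernel of the R-linear map R⁴ → R⁴ given by multiplication by A. Then the set of elements σ ∈ M such that T^{−k}·σ ≠ σ for every positive integer k is infinite. -/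
open LaurentPolynomial
open DualNumber

noncomputable section

/-- The unit `1 + ε` of the dual numbers over `ℤ`. -/
def uD : (DualNumber ℤ)ˣ where
  val := 1 + ε
  inv := 1 - ε
  val_inv := by linear_combination -DualNumber.eps_mul_eps (R := ℤ)
  inv_val := by linear_combination -DualNumber.eps_mul_eps (R := ℤ)

/-- Evaluation of Laurent polynomials at `T = 1 + ε`. -/
def phi : LaurentPolynomial ℤ →ₐ[ℤ] DualNumber ℤ :=
  AddMonoidAlgebra.lift ℤ (DualNumber ℤ) ℤ ((Units.coeHom _).comp (zpowersHom (DualNumber ℤ)ˣ uD))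

lemma phi_T (n : ℤ) : phi (T n) = ((uD ^ n : (DualNumber ℤ)ˣ) : DualNumber ℤ) := by
  have : (T n : LaurentPolynomial ℤ) = AddMonoidAlgebra.single n 1 := rfl
  rw [phi, this, AddMonoidAlgebra.lift_single]
  simp [zpowersHom_apply]

lemma one_add_eps_pow (n : ℕ) : ((1 + ε : DualNumber ℤ)) ^ n = 1 + (n : DualNumber ℤ) * ε := by
  induction n with
  | zero => simp
  | succ n ih =>
    rw [pow_succ, ih]
    push_cast
    linear_combination ((n : DualNumber ℤ)) * DualNumber.eps_mul_eps (R := ℤ)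

lemma one_sub_eps_pow (n : ℕ) : ((1 - ε : DualNumber ℤ)) ^ n = 1 - (n : DualNumber ℤ) * ε := by
  induction n with
  | zero => simp
  | succ n ih =>
    rw [pow_succ, ih]
    push_cast
    linear_combination ((n : DualNumber ℤ)) * DualNumber.eps_mul_eps (R := ℤ)

lemma phi_T_nat (N : ℕ) : phi (T (N : ℤ)) = 1 + (N : DualNumber ℤ) * ε := by
  rw [phi_T, zpow_natCast, Units.val_pow_eq_pow_val]
  exact one_add_eps_pow N

lemma phi_T_neg_nat (k : ℕ) : phi (T (-(k : ℤ))) = 1 - (k : DualNumber ℤ) * ε := by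
  rw [phi_T, zpow_neg, zpow_natCast, ← inv_pow, Units.val_pow_eq_pow_val]
  exact one_sub_eps_pow k

/-- If `T^N - 1` divides a constant, that constant is zero. -/
lemma L1 (N : ℕ) (p : LaurentPolynomial ℤ) (c : ℤ)
    (h : (T (N : ℤ) - 1) * p = (c : LaurentPolynomial ℤ)) : c = 0 := by
  have h2 := congrArg (TrivSqZeroExt.fst ∘ phi) h
  simp only [Function.comp_apply, map_mul, map_sub, map_one, map_intCast, phi_T_nat] at h2
  simpa [TrivSqZeroExt.fst_mul] using h2.symm

lemma L2 (N : ℕ) (m : ℤ) (v0 v3 : LaurentPolynomial ℤ) (c : ℤ) (k : ℕ)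
    (h0 : (T (N : ℤ) - 1) * v0 + (-(m : LaurentPolynomial ℤ) * T 1) * v3 = 0)
    (h3 : (T (N : ℤ) - 1) * v3 = (T (-(k : ℤ)) - 1) * (c : LaurentPolynomial ℤ)) :
    m * k * c = 0 := by
  have key : (T (N : ℤ) - 1) ^ 2 * v0
      = (m : LaurentPolynomial ℤ) * T 1 * ((T (-(k : ℤ)) - 1) * (c : LaurentPolynomial ℤ)) := by
    rw [← h3]; ring_nf; linear_combination (T (N:ℤ) - 1) * h0
  have h2 := congrArg phi key
  have hT1 : phi (T 1) = 1 + ε := by simpa using phi_T_nat 1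
  simp only [map_mul, map_sub, map_pow, map_one, map_intCast, phi_T_nat, phi_T_neg_nat, hT1] at h2
  set x := phi v0 with hx
  have heq : ((m * k * c : ℤ) : DualNumber ℤ) * ε = 0 := by
    push_cast
    linear_combination h2 - ((N : DualNumber ℤ)^2 * x + (m : DualNumber ℤ) * (k : DualNumber ℤ) * (c : DualNumber ℤ)) * DualNumber.eps_mul_eps (R := ℤ)
  have := congrArg TrivSqZeroExt.snd heq
  simpa [TrivSqZeroExt.snd_mul] using this

lemma range_extract (N : ℕ) (m : ℤ) (d : Fin 4 → LaurentPolynomial ℤ)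
    (hd : d ∈ LinearMap.range (Amat N m).mulVecLin) :
    ∃ v0 v3 : LaurentPolynomial ℤ,
      (T (N : ℤ) - 1) * v0 + (-(m : LaurentPolynomial ℤ) * T 1) * v3 = d 0 ∧
      (T (N : ℤ) - 1) * v3 = d 3 := by
  obtain ⟨v, hv⟩ := hd
  refine ⟨v 0, v 3, ?_, ?_⟩
  · have h0 := congrFun hv 0
    simp [Matrix.mulVecLin_apply, Matrix.mulVec, dotProduct, Fin.sum_univ_four, Amat] at h0
    linear_combination h0
  · have h3 := congrFun hv 3
    simp [Matrix.mulVecLin_apply, Matrix.mulVec, dotProduct, Fin.sum_univ_four, Amat] at h3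
    linear_combination h3

theorem stmt5 (N : ℕ) (hN : 0 < N) (m : ℤ) (hm : m ≠ 0) :
    {σ : Coker N m |
      ∀ k : ℕ, 0 < k → ((T (-(k : ℤ)) : LaurentPolynomial ℤ)) • σ ≠ σ}.Infinite := by
  apply Set.infinite_of_injective_forall_mem (f := fun n : ℕ => sigma N m (n + 1))
  · intro a b hab
    simp only [sigma] at hab
    erw [Submodule.Quotient.eq] at hab
    obtain ⟨v0, v3, -, h3⟩ := range_extract N m _ hab
    have : ((a : ℤ) + 1) - ((b : ℤ) + 1) = 0 := by
      apply L1 N v3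
      rw [h3]
      push_cast
      simp
    omega
  · intro n k hk hEq
    simp only [sigma] at hEq
    erw [← Submodule.Quotient.mk_smul, Submodule.Quotient.eq] at hEq
    obtain ⟨v0, v3, h0, h3⟩ := range_extract N m _ hEq
    have hmk : m * k * ((n : ℤ) + 1) = 0 := by
      apply L2 N m v0 v3
      · rw [h0]
        simp
      · rw [h3]
        push_cast
        simp [Pi.smul_apply, smul_eq_mul]
        try ring
    have hk' : (k : ℤ) ≠ 0 := by exact_mod_cast hk.ne'
    have hn' : ((n : ℤ) + 1) ≠ 0 := by positivity
    exact mul_ne_zero (mul_ne_zero hm hk') hn' hmk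
end
end

section
/- Let M be a module over the Laurent polynomial ring ℤ[T,T⁻¹], let σ ∈ M, and let N and k be positive integers. If (T^N − 1)²·σ = 0 and (T^k − 1)·σ = 0, then there exists a nonzero integer n such that n·(T^N − 1)·σ = 0. -/
open LaurentPolynomial Polynomial

/-- `X^gcd(a,b) - 1` lies in the ideal generated by `X^a-1` and `X^b-1`. -/
lemma gcd_mem_span (R : Type*) [CommRing R] :
    ∀ a b : ℕ, (X ^ Nat.gcd a b - 1 : R[X]) ∈ Ideal.span {X ^ a - 1, X ^ b - 1} := by
  intro a
  induction a using Nat.strong_induction_on with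
  | _ a ih =>
    intro b
    match a, ih with
    | 0, _ =>
      rw [Nat.gcd_zero_left]
      exact Ideal.subset_span (by simp)
    | (a' + 1), ih =>
      set a := a' + 1
      rw [Nat.gcd_rec]
      have hrec := ih (b % a) (Nat.mod_lt b (Nat.succ_pos a')) a
      refine Ideal.span_le.mpr ?_ hrec
      rintro p hp
      simp only [Set.mem_insert_iff, Set.mem_singleton_iff] at hp
      rcases hp with rfl | rfl
      · -- X ^ (b % a) - 1 ∈ span {X^a - 1, X^b - 1}
        obtain ⟨c, hc⟩ : (X ^ a - 1 : R[X]) ∣ X ^ (a * (b / a)) - 1 := by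
          have := sub_dvd_pow_sub_pow (X ^ a : R[X]) 1 (b / a)
          rwa [one_pow, ← pow_mul] at this
        have hb : (X ^ (b % a) - 1 : R[X])
            = (X ^ b - 1) - X ^ (b % a) * ((X ^ a - 1) * c) := by
          rw [← hc]
          have : (X : R[X]) ^ b = X ^ (b % a) * X ^ (a * (b / a)) := by
            rw [← pow_add, Nat.mod_add_div]
          rw [this]; ring
        rw [hb]
        have h1 : (X ^ b - 1 : R[X]) ∈ Ideal.span {X ^ a - 1, X ^ b - 1} :=
          Ideal.subset_span (Set.mem_insert_iff.mpr (Or.inr rfl))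
        have h2 : ((X ^ a - 1) * c : R[X]) ∈ Ideal.span {X ^ a - 1, X ^ b - 1} :=
          Ideal.mul_mem_right _ _
            (Ideal.subset_span (Set.mem_insert_iff.mpr (Or.inl rfl)))
        exact sub_mem h1 (Ideal.mul_mem_left _ _ h2)
      · exact Ideal.subset_span (Set.mem_insert_iff.mpr (Or.inl rfl))

/-- Bézout identity with an integer multiplier. -/
lemma bezout_int (N k : ℕ) (hN : 0 < N) (hk : 0 < k) :
    ∃ n : ℤ, n ≠ 0 ∧ ∃ U V : ℤ[X],
      Polynomial.C n * (X ^ Nat.gcd N k - 1) = U * (X ^ N - 1) ^ 2 + V * (X ^ k - 1) := by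
  set ℓ := Nat.gcd N k
  -- work in ℚ[X]
  set P : ℚ[X] := (X ^ N - 1) ^ 2 with hP
  set Q : ℚ[X] := X ^ k - 1 with hQ
  have hQsf : Squarefree Q := by
    have : (X ^ k - Polynomial.C (1 : ℚ)).Separable :=
      Polynomial.separable_X_pow_sub_C 1 (by exact_mod_cast hk.ne') one_ne_zero
    simpa [hQ] using this.squarefree
  set g : ℚ[X] := EuclideanDomain.gcd P Q with hg
  have hgP : g ∣ P := EuclideanDomain.gcd_dvd_left P Q
  have hgQ : g ∣ Q := EuclideanDomain.gcd_dvd_right P Q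
  have hgsf : Squarefree g := hQsf.squarefree_of_dvd hgQ
  have hgN : g ∣ X ^ N - 1 := hgsf.isRadical 2 _ (by rwa [← hP])
  -- g divides X^ℓ - 1
  have hmem := gcd_mem_span ℚ N k
  rw [Ideal.mem_span_pair] at hmem
  obtain ⟨p, q, hpq⟩ := hmem
  have hgl : g ∣ (X ^ ℓ - 1 : ℚ[X]) := by
    rw [← hpq]
    exact dvd_add (Dvd.dvd.mul_left hgN p) (Dvd.dvd.mul_left hgQ q)
  obtain ⟨c, hc⟩ := hgl
  -- Bézout for g
  have hbez := EuclideanDomain.gcd_eq_gcd_ab P Q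
  set A := EuclideanDomain.gcdA P Q
  set B := EuclideanDomain.gcdB P Q
  have hgAB : g = P * A + Q * B := by rw [hg]; exact hbez
  have hXl : (X ^ ℓ - 1 : ℚ[X]) = (A * c) * P + (B * c) * Q := by
    rw [hc, hgAB]; ring
  -- clear denominators
  obtain ⟨b₁, hU⟩ := IsLocalization.integerNormalization_map_to_map (nonZeroDivisors ℤ) (A * c)
  obtain ⟨b₂, hV⟩ := IsLocalization.integerNormalization_map_to_map (nonZeroDivisors ℤ) (B * c)
  set U : ℤ[X] := IsLocalization.integerNormalization (nonZeroDivisors ℤ) (A * c)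
  set V : ℤ[X] := IsLocalization.integerNormalization (nonZeroDivisors ℤ) (B * c)
  refine ⟨(b₁ : ℤ) * (b₂ : ℤ), mul_ne_zero
    (nonZeroDivisors.coe_ne_zero b₁) (nonZeroDivisors.coe_ne_zero b₂),
    Polynomial.C (b₂ : ℤ) * U, Polynomial.C (b₁ : ℤ) * V, ?_⟩
  apply Polynomial.map_injective (algebraMap ℤ ℚ) (algebraMap ℤ ℚ).injective_int
  push_cast
  simp only [Polynomial.map_add, Polynomial.map_mul, Polynomial.map_pow,
    Polynomial.map_sub, Polynomial.map_one, Polynomial.map_pow, Polynomial.map_X,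
    Polynomial.map_intCast, Polynomial.map_ofNat, map_C]
  rw [hU, hV]
  have hb1 : ((b₁ : ℤ) • (A * c) : ℚ[X]) = Polynomial.C ((b₁ : ℤ) : ℚ) * (A * c) := by
    rw [zsmul_eq_mul]; norm_cast
  have hb2 : ((b₂ : ℤ) • (B * c) : ℚ[X]) = Polynomial.C ((b₂ : ℤ) : ℚ) * (B * c) := by
    rw [zsmul_eq_mul]; norm_cast
  rw [hb1, hb2, hXl]
  simp only [map_mul, hP, hQ, eq_intCast]
  ring

theorem stmt8 (M : Type*) [AddCommGroup M] [Module (LaurentPolynomial ℤ) M]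
    (σ : M) (N k : ℕ) (hN : 0 < N) (hk : 0 < k)
    (h1 : ((T (N : ℤ) - 1 : LaurentPolynomial ℤ)) ^ 2 • σ = 0)
    (h2 : ((T (k : ℤ) - 1 : LaurentPolynomial ℤ)) • σ = 0) :
    ∃ n : ℤ, n ≠ 0 ∧ n • (((T (N : ℤ) - 1 : LaurentPolynomial ℤ)) • σ) = 0 := by
  set ℓ := Nat.gcd N k with hℓ
  obtain ⟨n, hn, U, V, hId⟩ := bezout_int N k hN hk
  -- X^ℓ - 1 divides X^N - 1 over ℤ
  obtain ⟨w, hw⟩ : (X ^ ℓ - 1 : ℤ[X]) ∣ X ^ N - 1 := by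
    have := sub_dvd_pow_sub_pow (X ^ ℓ : ℤ[X]) 1 (N / ℓ)
    rwa [one_pow, ← pow_mul, Nat.mul_div_cancel' (Nat.gcd_dvd_left N k)] at this
  -- move to Laurent polynomials
  have hId' : LaurentPolynomial.C n * (T (ℓ : ℤ) - 1)
      = Polynomial.toLaurent U * (T (N : ℤ) - 1) ^ 2
        + Polynomial.toLaurent V * (T (k : ℤ) - 1) := by
    have := congrArg Polynomial.toLaurent hId
    simpa [Polynomial.toLaurent_X_pow] using this
  have hw' : (T (N : ℤ) - 1 : LaurentPolynomial ℤ)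
      = (T (ℓ : ℤ) - 1) * Polynomial.toLaurent w := by
    have := congrArg Polynomial.toLaurent hw
    simpa [Polynomial.toLaurent_X_pow] using this
  refine ⟨n, hn, ?_⟩
  have key : (LaurentPolynomial.C n * (T (ℓ : ℤ) - 1)) • σ = 0 := by
    rw [hId', add_smul, mul_smul, mul_smul, h1, h2, smul_zero, smul_zero, add_zero]
  rw [← Int.cast_smul_eq_zsmul (LaurentPolynomial ℤ),
    ← eq_intCast (LaurentPolynomial.C) n, ← mul_smul, hw',
    show LaurentPolynomial.C n * ((T (ℓ : ℤ) - 1) * Polynomial.toLaurent w)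
      = Polynomial.toLaurent w * (LaurentPolynomial.C n * (T (ℓ : ℤ) - 1)) by ring,
    mul_smul, key, smul_zero]
end
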